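/- For each integer d ≥ 3, the equation (2/d)(1 + t^d) · t²/(1−t²) + log(1−t²) = 0 has exactly one solution t in the open interval (0,1). -/

import Mathlib

set_option maxHeartbeats 1000000

/-- **Uniqueness of the critical point for the spherical threshold.** For every integer
`d ≥ 3`, the equation `(2/d)(1+t^d) t²/(1-t²) + log(1-t²) = 0` has exactly one solution
`t ∈ (0,1)`. -/
theorem spherical_critical_point_unique (d : ℕ) (hd : 3 ≤ d) :
    ∃! t : ℝ, t ∈ Set.Ioo (0:ℝ) 1 ∧
      2 / (d:ℝ) * (1 + t^d) * (t^2 / (1 - t^2)) + Real.log (1 - t^2) = 0 := by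
  have hd3 : (3:ℝ) ≤ (d:ℝ) := by exact_mod_cast hd
  have hdpos : (0:ℝ) < (d:ℝ) := by linarith
  have hdne : (d:ℝ) ≠ 0 := ne_of_gt hdpos
  set F : ℝ → ℝ := fun t => 2 / (d:ℝ) * (1 + t^d) + Real.log (1 - t^2) * (1 - t^2) / t^2
    with hFdef
  -- basic facts on Ioo 0 1
  have hu : ∀ t ∈ Set.Ioo (0:ℝ) 1, 0 < 1 - t^2 := by
    intro t ht
    nlinarith [ht.1, ht.2]
  have hlog : ∀ t ∈ Set.Ioo (0:ℝ) 1, Real.log (1 - t^2) < -t^2 := by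
    intro t ht
    have h1 := Real.log_lt_sub_one_of_pos (hu t ht) (by nlinarith [ht.1, ht.2])
    linarith
  -- equivalence of the two equations
  have hequiv : ∀ t ∈ Set.Ioo (0:ℝ) 1,
      (2 / (d:ℝ) * (1 + t^d) * (t^2 / (1 - t^2)) + Real.log (1 - t^2) = 0 ↔ F t = 0) := by
    intro t ht
    have ht0 : t ≠ 0 := ne_of_gt ht.1
    have hune : 1 - t^2 ≠ 0 := ne_of_gt (hu t ht)
    have hfac : (0:ℝ) < (1 - t^2) / t^2 := div_pos (hu t ht) (by positivity)
    have hmul : F t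
        = (2 / (d:ℝ) * (1 + t^d) * (t^2 / (1 - t^2)) + Real.log (1 - t^2))
          * ((1 - t^2) / t^2) := by
      simp only [hFdef]
      field_simp
    constructor
    · intro h
      rw [hmul, h, zero_mul]
    · intro h
      rw [hmul] at h
      rcases mul_eq_zero.mp h with h' | h'
      · exact h'
      · exact absurd h' (ne_of_gt hfac)
  -- derivative
  have hderiv : ∀ t ∈ Set.Ioo (0:ℝ) 1,
      HasDerivAt F (2 * t^(d-1) + 2 * (-t^2 - Real.log (1 - t^2)) / t^3) t := by
    intro t ht
    have ht0 : t ≠ 0 := ne_of_gt ht.1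
    have hune : 1 - t^2 ≠ 0 := ne_of_gt (hu t ht)
    have hsq : HasDerivAt (fun x : ℝ => x^2) (2 * t) t := by
      simpa using hasDerivAt_pow 2 t
    have h1 : HasDerivAt (fun x : ℝ => 1 - x^2) (-(2 * t)) t := hsq.const_sub 1
    have h2 : HasDerivAt (fun x : ℝ => Real.log (1 - x^2)) (-(2 * t) / (1 - t^2)) t :=
      h1.log hune
    have h3 := h2.mul h1
    have h4 := h3.div hsq (pow_ne_zero 2 ht0)
    have h5 : HasDerivAt (fun x : ℝ => 2 / (d:ℝ) * (1 + x^d))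
        (2 / (d:ℝ) * ((d:ℝ) * t^(d-1))) t :=
      ((hasDerivAt_pow d t).const_add 1).const_mul _
    have := h5.add h4
    refine HasDerivAt.congr_deriv this ?_
    have hL := Real.log (1 - t^2)
    simp only [Pi.mul_apply]
    field_simp
    ring
  have hDpos : ∀ t ∈ Set.Ioo (0:ℝ) 1,
      0 < 2 * t^(d-1) + 2 * (-t^2 - Real.log (1 - t^2)) / t^3 := by
    intro t ht
    have h1 : (0:ℝ) < 2 * t^(d-1) := by
      have := pow_pos ht.1 (d-1); linarith
    have h2 : (0:ℝ) < 2 * (-t^2 - Real.log (1 - t^2)) / t^3 := by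
      apply div_pos
      · nlinarith [hlog t ht]
      · exact pow_pos ht.1 3
    linarith
  have hcont : ContinuousOn F (Set.Ioo 0 1) := fun t ht =>
    ((hderiv t ht).differentiableAt.continuousAt).continuousWithinAt
  have hmono : StrictMonoOn F (Set.Ioo 0 1) := by
    apply strictMonoOn_of_deriv_pos (convex_Ioo 0 1) hcont
    intro t ht
    rw [interior_Ioo] at ht
    rw [(hderiv t ht).deriv]
    exact hDpos t ht
  -- endpoints
  set b : ℝ := Real.sqrt (1 - Real.exp (-(d:ℝ))) with hbdef
  have hEpos : (0:ℝ) < Real.exp (-(d:ℝ)) := Real.exp_pos _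
  have hexpd : 1 + (d:ℝ)^2 / 2 < Real.exp (d:ℝ) := by
    have h3 : (d:ℝ)/3 + 1 ≤ Real.exp ((d:ℝ)/3) := Real.add_one_le_exp _
    have hcube : ((d:ℝ)/3 + 1)^3 ≤ (Real.exp ((d:ℝ)/3))^3 := by
      apply pow_le_pow_left₀ (by positivity) h3
    have hexp3 : (Real.exp ((d:ℝ)/3))^3 = Real.exp (d:ℝ) := by
      rw [← Real.exp_nat_mul]
      congr 1
      push_cast
      ring
    rw [hexp3] at hcube
    nlinarith [hcube, hd3]
  have hElt : Real.exp (-(d:ℝ)) < 1 := by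
    rw [Real.exp_neg]
    rw [inv_lt_one₀ (Real.exp_pos _)]
    nlinarith [hexpd, sq_nonneg (d:ℝ)]
  have hb2 : b^2 = 1 - Real.exp (-(d:ℝ)) := Real.sq_sqrt (by linarith)
  have hbpos : 0 < b := Real.sqrt_pos.mpr (by linarith)
  have hb1 : b < 1 := by
    nlinarith [hb2, hbpos, hEpos]
  have hblow : (1:ℝ)/4 < b := by
    have hE3 : Real.exp (-(d:ℝ)) ≤ Real.exp (-(3:ℝ)) := Real.exp_le_exp.mpr (by linarith)
    have : Real.exp (-(3:ℝ)) < 1/2 := by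
      have hx : Real.exp (-(3:ℝ)) * Real.exp 3 = 1 := by rw [← Real.exp_add]; norm_num
      have hy : (2:ℝ) < Real.exp 3 := by nlinarith [Real.add_one_le_exp (3:ℝ)]
      nlinarith [Real.exp_pos (-(3:ℝ))]
    nlinarith [hb2, hbpos]
  have hamem : (1:ℝ)/4 ∈ Set.Ioo (0:ℝ) 1 := by norm_num
  have hbmem : b ∈ Set.Ioo (0:ℝ) 1 := ⟨hbpos, hb1⟩
  -- F(1/4) < 0
  have hFa : F (1/4) < 0 := by
    have hlog4 : Real.log (1 - (1/4:ℝ)^2) < -(1/4:ℝ)^2 := hlog _ hamem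
    have hpow : ((1:ℝ)/4)^d ≤ ((1:ℝ)/4)^3 :=
      pow_le_pow_of_le_one (by norm_num) (by norm_num) hd
    have h2d : 2 / (d:ℝ) ≤ 2/3 := by
      rw [div_le_div_iff₀ hdpos (by norm_num)]
      linarith
    have hterm1 : 2 / (d:ℝ) * (1 + (1/4:ℝ)^d) ≤ 2/3 * (1 + (1/64 : ℝ)) := by
      have h1 : (0:ℝ) ≤ 1 + (1/4:ℝ)^d := by positivity
      have h2 : 1 + ((1:ℝ)/4)^d ≤ 1 + 1/64 := by norm_num at hpow ⊢; linarith
      nlinarith [h2d, hdpos]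
    have hterm2 : Real.log (1 - (1/4:ℝ)^2) * (1 - (1/4:ℝ)^2) / (1/4:ℝ)^2 < -(15/16 : ℝ) := by
      have h15 : (1:ℝ) - (1/4:ℝ)^2 = 15/16 := by norm_num
      rw [h15] at hlog4 ⊢
      rw [div_lt_iff₀ (by norm_num : (0:ℝ) < (1/4:ℝ)^2)]
      have : Real.log (15/16 : ℝ) * (15/16) < -(1/16 : ℝ) * (15/16) := by
        nlinarith [hlog4]
      nlinarith [this]
    rw [hFdef]
    dsimp only
    linarith [hterm1, hterm2]
  -- F b > 0
  have hFb : 0 < F b := by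
    have hub : 1 - b^2 = Real.exp (-(d:ℝ)) := by rw [hb2]; ring
    have hlogb : Real.log (1 - b^2) = -(d:ℝ) := by rw [hub, Real.log_exp]
    have hkey : (d:ℝ)^2 * Real.exp (-(d:ℝ)) < 2 * (1 - Real.exp (-(d:ℝ))) := by
      have h1 : Real.exp (-(d:ℝ)) * Real.exp (d:ℝ) = 1 := by
        rw [← Real.exp_add]; simp
      nlinarith [hexpd, hEpos]
    have hbd : (0:ℝ) ≤ b^d := by positivity
    rw [hFdef]
    dsimp only
    rw [hlogb, hub]
    have h2 : -(d:ℝ) * Real.exp (-(d:ℝ)) / b^2 = -((d:ℝ) * Real.exp (-(d:ℝ)) / b^2) := by ring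
    have hterm2 : -((d:ℝ) * Real.exp (-(d:ℝ))) / b^2 > -(2 / (d:ℝ)) := by
      rw [gt_iff_lt, neg_div, neg_lt_neg_iff, div_lt_div_iff₀ (by positivity) hdpos, hb2]
      nlinarith [hkey]
    have hterm1 : 2 / (d:ℝ) ≤ 2 / (d:ℝ) * (1 + b^d) := by
      nlinarith [hbd, hdpos, div_pos (by norm_num : (0:ℝ) < 2) hdpos]
    have h2 : -(d:ℝ) * Real.exp (-(d:ℝ)) / b^2
        = -((d:ℝ) * Real.exp (-(d:ℝ))) / b^2 := by ring
    rw [h2]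
    linarith [hterm1, hterm2]
  -- existence by IVT
  have hab : (1:ℝ)/4 ≤ b := le_of_lt hblow
  have hsub : Set.Icc ((1:ℝ)/4) b ⊆ Set.Ioo (0:ℝ) 1 := fun x hx =>
    ⟨by linarith [hx.1], by linarith [hx.2]⟩
  have hcont' : ContinuousOn F (Set.Icc ((1:ℝ)/4) b) := hcont.mono hsub
  have h0mem : (0:ℝ) ∈ Set.Ioo (F (1/4)) (F b) := ⟨hFa, hFb⟩
  obtain ⟨t₀, ht₀mem, hFt₀⟩ := intermediate_value_Ioo hab hcont' h0mem
  have ht₀ : t₀ ∈ Set.Ioo (0:ℝ) 1 :=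
    ⟨by linarith [ht₀mem.1], by linarith [ht₀mem.2, hb1]⟩
  refine ⟨t₀, ⟨ht₀, (hequiv t₀ ht₀).mpr hFt₀⟩, ?_⟩
  rintro y ⟨hy, hyeq⟩
  have hFy : F y = 0 := (hequiv y hy).mp hyeq
  exact hmono.injOn hy ht₀ (by rw [hFy, hFt₀])
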